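/- arXiv:2110.00599 — 3 statements merged into one kernel-verified Lean document; each statement's English description precedes it below -/
import Mathlib

section
/- Let A, B be bounded invertible operators on a complex separable Hilbert space H such that (A−I)(B−I), (B−I)(A−I), (A*−I)(B−I), and (B−I)(A*−I) are trace class. Let A = U|A| be the polar decomposition of A. Then U is unitary, |A| is invertible, and the operators (|A|−I)(B−I), (B−I)(|A|−I), (U−I)(B−I), and (B−I)(U−I) are all trace class. -/
open Filter NormedSpace ContinuousLinearMap
open scoped Topology

noncomputable section

variable {H : Type} [NormedAddCommGroup H] [InnerProductSpace ℂ H] [CompleteSpace H]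

/-- `T` is a Hilbert–Schmidt operator: for every Hilbert basis, `∑ ‖T eᵢ‖² < ∞`. -/
def IsHilbertSchmidt (T : H →L[ℂ] H) : Prop :=
  ∀ (ι : Type) (b : HilbertBasis ι ℂ H), Summable fun i => ‖T (b i)‖ ^ 2

/-- `T` is a trace class operator, i.e. a product of two Hilbert–Schmidt operators. -/
def IsTraceClass (T : H →L[ℂ] H) : Prop :=
  ∃ A B : H →L[ℂ] H, IsHilbertSchmidt A ∧ IsHilbertSchmidt B ∧ T = A ∘L B

/-- `T` is trace class and its trace equals `τ`:
for every Hilbert basis, `∑ ⟪eᵢ, T eᵢ⟫ = τ`. -/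
def HasTrace (T : H →L[ℂ] H) (τ : ℂ) : Prop :=
  IsTraceClass T ∧
  ∀ (ι : Type) (b : HilbertBasis ι ℂ H),
    HasSum (fun i => (inner ℂ (b i) (T (b i)) : ℂ)) τ

/-- `T = I + S` with `S` trace class, and the Fredholm determinant of `T` equals `d`:
for every Hilbert basis, the finite-section determinants of `T` converge to `d`
along the net of finite subsets of the index set. -/
def HasFredholmDet (T : H →L[ℂ] H) (d : ℂ) : Prop :=
  IsTraceClass (T - 1) ∧
  ∀ (ι : Type) (b : HilbertBasis ι ℂ H),
    letI := Classical.decEq ι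
    Filter.Tendsto (fun s : Finset ι =>
      Matrix.det (Matrix.of fun i j : s => (inner ℂ (b (i : ι)) (T (b (j : ι))) : ℂ)))
      Filter.atTop (nhds d)

section Lemmas

open scoped ENNReal

set_option linter.unusedSectionVars false

private lemma parseval {ι : Type} (b : HilbertBasis ι ℂ H) (x : H) :
    HasSum (fun i => ‖(inner ℂ (b i) x : ℂ)‖ ^ 2) (‖x‖ ^ 2) := by
  have h := (b.hasSum_inner_mul_inner x x).mapL Complex.reCLM
  have e1 : ∀ i, Complex.reCLM ((inner ℂ x (b i) : ℂ) * inner ℂ (b i) x) =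
      ‖(inner ℂ (b i) x : ℂ)‖ ^ 2 := by
    intro i
    rw [← inner_conj_symm (b i) x]
    rw [Complex.mul_conj, RCLike.norm_conj]
    simp [Complex.normSq_eq_norm_sq, ← Complex.ofReal_pow]
  have e2 : Complex.reCLM (inner ℂ x x : ℂ) = ‖x‖ ^ 2 := inner_self_eq_norm_sq (𝕜 := ℂ) x
  rw [funext e1, e2] at h
  exact h

private lemma hs_add {S T : H →L[ℂ] H} (hS : IsHilbertSchmidt S) (hT : IsHilbertSchmidt T) :
    IsHilbertSchmidt (S + T) := by
  intro ι b
  refine Summable.of_nonneg_of_le (fun i => by positivity)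
    (fun i => ?_) (((hS ι b).add (hT ι b)).mul_left 2)
  have h1 : ‖(S + T) (b i)‖ ≤ ‖S (b i)‖ + ‖T (b i)‖ := by
    rw [ContinuousLinearMap.add_apply]; exact norm_add_le _ _
  have h2 : ‖(S + T) (b i)‖ ^ 2 ≤ (‖S (b i)‖ + ‖T (b i)‖) ^ 2 :=
    pow_le_pow_left₀ (norm_nonneg _) h1 2
  nlinarith [sq_nonneg (‖S (b i)‖ - ‖T (b i)‖)]

private lemma hs_mul_left (S : H →L[ℂ] H) {T : H →L[ℂ] H} (hT : IsHilbertSchmidt T) :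
    IsHilbertSchmidt (S * T) := by
  intro ι b
  refine Summable.of_nonneg_of_le (fun i => by positivity)
    (fun i => ?_) ((hT ι b).mul_left (‖S‖ ^ 2))
  rw [ContinuousLinearMap.mul_apply]
  calc ‖S (T (b i))‖ ^ 2 ≤ (‖S‖ * ‖T (b i)‖) ^ 2 :=
        pow_le_pow_left₀ (norm_nonneg _) (S.le_opNorm _) 2
    _ = ‖S‖ ^ 2 * ‖T (b i)‖ ^ 2 := by ring

private lemma hs_adjoint {T : H →L[ℂ] H} (hT : IsHilbertSchmidt T) :
    IsHilbertSchmidt (ContinuousLinearMap.adjoint T) := by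
  intro κ c
  obtain ⟨w, b, -⟩ := exists_hilbertBasis ℂ H
  set f : w × κ → ℝ := fun p => ‖(inner ℂ (c p.2) (T (b p.1)) : ℂ)‖ ^ 2 with hf
  have hnn : 0 ≤ f := fun p => by positivity
  have hsum1 : Summable f := by
    rw [summable_prod_of_nonneg hnn]
    refine ⟨fun i => (parseval c (T (b i))).summable, ?_⟩
    have e : (fun i : w => ∑' j, f (i, j)) = fun i => ‖T (b i)‖ ^ 2 :=
      funext fun i => (parseval c (T (b i))).tsum_eq
    rw [e]; exact hT w b
  have hswap : Summable fun p : κ × w => f p.swap :=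
    ((Equiv.prodComm w κ).summable_iff (f := fun p : κ × w => f p.swap)).mp (by
      convert hsum1 using 1; rfl)
  have h2 := (summable_prod_of_nonneg (fun p : κ × w => hnn p.swap)).mp hswap
  refine h2.2.congr fun j => ?_
  have key : ∀ i : w, f (i, j) = ‖(inner ℂ (b i) (ContinuousLinearMap.adjoint T (c j)) : ℂ)‖ ^ 2 := by
    intro i
    rw [hf]
    simp only
    rw [← ContinuousLinearMap.adjoint_inner_left T, norm_inner_symm]
  calc (∑' i : w, f (i, j))
      = ∑' i : w, ‖(inner ℂ (b i) (ContinuousLinearMap.adjoint T (c j)) : ℂ)‖ ^ 2 :=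
        tsum_congr key
    _ = ‖ContinuousLinearMap.adjoint T (c j)‖ ^ 2 :=
        (parseval b (ContinuousLinearMap.adjoint T (c j))).tsum_eq

private lemma hs_mul_right {T : H →L[ℂ] H} (hT : IsHilbertSchmidt T) (S : H →L[ℂ] H) :
    IsHilbertSchmidt (T * S) := by
  have : T * S = ContinuousLinearMap.adjoint
      (ContinuousLinearMap.adjoint S * ContinuousLinearMap.adjoint T) := by
    rw [show (ContinuousLinearMap.adjoint S * ContinuousLinearMap.adjoint T)
        = ContinuousLinearMap.adjoint S ∘L ContinuousLinearMap.adjoint T from rfl,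
      ← ContinuousLinearMap.adjoint_comp, ContinuousLinearMap.adjoint_adjoint]
    rfl
  rw [this]
  exact hs_adjoint (hs_mul_left _ (hs_adjoint hT))

private lemma extend_norm_sq {w : Type} (g : w → w) (hg : Function.Injective g)
    (f : w → ℂ) : (fun j => ‖Function.extend g f 0 j‖ ^ (2:ℝ)) =
      Function.extend g (fun n => ‖f n‖ ^ (2:ℝ)) 0 := by
  funext j
  rcases em (∃ n, g n = j) with ⟨n, rfl⟩ | h
  · rw [hg.extend_apply, hg.extend_apply]
  · rw [Function.extend_apply' _ _ _ h, Function.extend_apply' _ _ _ h]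
    simp [Real.zero_rpow]

private lemma memℓp_extend {w : Type} (g : w → w) (hg : Function.Injective g)
    (f : lp (fun _ : w => ℂ) 2) : Memℓp (Function.extend g (⇑f) 0) 2 := by
  apply memℓp_gen
  have h2 : (2 : ℝ≥0∞).toReal = (2:ℝ) := by norm_num
  rw [h2, extend_norm_sq g hg]
  rw [summable_extend_zero hg]
  have := lp.memℓp f
  rw [memℓp_gen_iff (by norm_num)] at this
  rwa [h2] at this

private def lpExtendL {w : Type} (g : w → w) (hg : Function.Injective g) :
    lp (fun _ : w => ℂ) 2 →ₗ[ℂ] lp (fun _ : w => ℂ) 2 where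
  toFun f := ⟨Function.extend g (⇑f) 0, memℓp_extend g hg f⟩
  map_add' f₁ f₂ := by
    apply lp.ext
    funext j
    rcases em (∃ n, g n = j) with ⟨n, rfl⟩ | h
    · simp only [lp.coeFn_add, Pi.add_apply, hg.extend_apply]
    · show Function.extend g (⇑(f₁ + f₂)) 0 j = _
      rw [Function.extend_apply' _ _ _ h]
      have : ((⟨Function.extend g (⇑f₁) 0, memℓp_extend g hg f₁⟩ +
          ⟨Function.extend g (⇑f₂) 0, memℓp_extend g hg f₂⟩ : lp (fun _ : w => ℂ) 2) : ∀ _ : w, ℂ) j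
          = Function.extend g (⇑f₁) 0 j + Function.extend g (⇑f₂) 0 j := rfl
      rw [this, Function.extend_apply' _ _ _ h, Function.extend_apply' _ _ _ h]
      simp
  map_smul' c f := by
    apply lp.ext
    show Function.extend g (⇑(c • f)) 0 = _
    have hc : ⇑((RingHom.id ℂ) c • (⟨Function.extend g (⇑f) 0, memℓp_extend g hg f⟩ :
        lp (fun _ : w => ℂ) 2)) = fun j => c • Function.extend g (⇑f) 0 j := rfl
    rw [hc]
    funext j
    rcases em (∃ n, g n = j) with ⟨n, rfl⟩ | h
    · rw [hg.extend_apply, hg.extend_apply]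
      simp
    · rw [Function.extend_apply' _ _ _ h, Function.extend_apply' _ _ _ h]
      simp

private lemma lpExtendL_inner {w : Type} (g : w → w) (hg : Function.Injective g)
    (f₁ f₂ : lp (fun _ : w => ℂ) 2) :
    (inner ℂ (lpExtendL g hg f₁) (lpExtendL g hg f₂) : ℂ) = inner ℂ f₁ f₂ := by
  have h1 : HasSum (fun n => (inner ℂ (f₁ n) (f₂ n) : ℂ)) (inner ℂ f₁ f₂) := lp.hasSum_inner f₁ f₂
  have h2 : HasSum (Function.extend g (fun n => (inner ℂ (f₁ n) (f₂ n) : ℂ)) 0) (inner ℂ f₁ f₂) :=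
    (hasSum_extend_zero hg).mpr h1
  have e : Function.extend g (fun n => (inner ℂ (f₁ n) (f₂ n) : ℂ)) 0
      = fun j => (inner ℂ ((lpExtendL g hg f₁) j) ((lpExtendL g hg f₂) j) : ℂ) := by
    funext j
    rcases em (∃ n, g n = j) with ⟨n, rfl⟩ | h
    · rw [hg.extend_apply]
      show _ = inner ℂ (Function.extend g (⇑f₁) 0 (g n)) (Function.extend g (⇑f₂) 0 (g n))
      rw [hg.extend_apply, hg.extend_apply]
    · rw [Function.extend_apply' _ _ _ h]
      show (0:ℂ) = inner ℂ (Function.extend g (⇑f₁) 0 j) (Function.extend g (⇑f₂) 0 j)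
      rw [Function.extend_apply' _ _ _ h]
      simp
  rw [e] at h2
  exact (lp.hasSum_inner (lpExtendL g hg f₁) (lpExtendL g hg f₂)).unique h2

private lemma lpExtendL_inner_disjoint {w : Type} (g₁ g₂ : w → w)
    (hg₁ : Function.Injective g₁) (hg₂ : Function.Injective g₂)
    (hd : ∀ n m, g₁ n ≠ g₂ m) (f₁ f₂ : lp (fun _ : w => ℂ) 2) :
    (inner ℂ (lpExtendL g₁ hg₁ f₁) (lpExtendL g₂ hg₂ f₂) : ℂ) = 0 := by
  have e : (fun j => (inner ℂ ((lpExtendL g₁ hg₁ f₁) j) ((lpExtendL g₂ hg₂ f₂) j) : ℂ))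
      = fun _ => (0:ℂ) := by
    funext j
    rcases em (∃ n, g₁ n = j) with ⟨n, rfl⟩ | h
    · show inner ℂ (Function.extend g₁ (⇑f₁) 0 (g₁ n)) (Function.extend g₂ (⇑f₂) 0 (g₁ n)) = (0:ℂ)
      rw [show Function.extend g₂ (⇑f₂) 0 (g₁ n) = 0 from
        Function.extend_apply' _ _ _ (by rintro ⟨m, hm⟩; exact hd n m hm.symm)]
      simp
    · show inner ℂ (Function.extend g₁ (⇑f₁) 0 j) (Function.extend g₂ (⇑f₂) 0 j) = (0:ℂ)
      rw [Function.extend_apply' _ _ _ h]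
      simp
  have h2 : HasSum (fun j => (inner ℂ ((lpExtendL g₁ hg₁ f₁) j) ((lpExtendL g₂ hg₂ f₂) j) : ℂ)) 0 := by
    rw [e]; exact hasSum_zero
  exact (lp.hasSum_inner _ _).unique h2

private def lpExtendLi {w : Type} (g : w → w) (hg : Function.Injective g) :
    lp (fun _ : w => ℂ) 2 →ₗᵢ[ℂ] lp (fun _ : w => ℂ) 2 where
  toLinearMap := lpExtendL g hg
  norm_map' f := by
    rw [@norm_eq_sqrt_re_inner ℂ, @norm_eq_sqrt_re_inner ℂ]
    congr 1
    rw [show ((lpExtendL g hg) f) = lpExtendL g hg f from rfl, lpExtendL_inner g hg f f]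

private def Vop {w : Type} (b : HilbertBasis w ℂ H) (g : w → w)
    (hg : Function.Injective g) : H →L[ℂ] H :=
  (b.repr.symm.toLinearIsometry.comp ((lpExtendLi g hg).comp
    b.repr.toLinearIsometry)).toContinuousLinearMap

private lemma Vop_inner {w : Type} (b : HilbertBasis w ℂ H) (g : w → w)
    (hg : Function.Injective g) (x y : H) :
    (inner ℂ (Vop b g hg x) (Vop b g hg y) : ℂ) = inner ℂ x y := by
  show (inner ℂ (b.repr.symm (lpExtendLi g hg (b.repr x)))
    (b.repr.symm (lpExtendLi g hg (b.repr y))) : ℂ) = _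
  rw [b.repr.symm.inner_map_map]
  rw [show ((lpExtendLi g hg) (b.repr x)) = lpExtendL g hg (b.repr x) from rfl,
    show ((lpExtendLi g hg) (b.repr y)) = lpExtendL g hg (b.repr y) from rfl,
    lpExtendL_inner, b.repr.inner_map_map]

private lemma Vop_inner_disjoint {w : Type} (b : HilbertBasis w ℂ H) (g₁ g₂ : w → w)
    (hg₁ : Function.Injective g₁) (hg₂ : Function.Injective g₂)
    (hd : ∀ n m, g₁ n ≠ g₂ m) (x y : H) :
    (inner ℂ (Vop b g₁ hg₁ x) (Vop b g₂ hg₂ y) : ℂ) = 0 := by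
  show (inner ℂ (b.repr.symm (lpExtendLi g₁ hg₁ (b.repr x)))
    (b.repr.symm (lpExtendLi g₂ hg₂ (b.repr y))) : ℂ) = 0
  rw [b.repr.symm.inner_map_map]
  exact lpExtendL_inner_disjoint g₁ g₂ hg₁ hg₂ hd _ _

private lemma orth_countable [TopologicalSpace.SeparableSpace H] {w : Set H}
    (hw : Orthonormal ℂ ((↑) : w → H)) : Countable w := by
  obtain ⟨D, hDc, hDd⟩ := TopologicalSpace.exists_countable_dense H
  have hch : ∀ x : w, ∃ d : H, d ∈ D ∧ dist (x : H) d < 0.7 := by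
    intro x
    obtain ⟨y, hy1, hy2⟩ := Metric.dense_iff.mp hDd (x : H) 0.7 (by norm_num)
    exact ⟨y, hy2, by rw [dist_comm]; exact Metric.mem_ball.mp hy1⟩
  choose f hf1 hf2 using hch
  have hinj : Function.Injective f := by
    intro x y hxy
    by_contra hne
    have hdist : dist (x : H) (y : H) ^ 2 = 2 := by
      rw [dist_eq_norm, ← @inner_self_eq_norm_sq ℂ]
      have h1 : (inner ℂ ((x:H) - y) ((x:H) - y) : ℂ) = inner ℂ (x:H) (x:H) - inner ℂ (x:H) (y:H)
          - inner ℂ (y:H) (x:H) + inner ℂ (y:H) (y:H) := by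
        simp only [inner_sub_left, inner_sub_right]; ring
      have hx : (inner ℂ (x:H) (x:H) : ℂ) = 1 := by
        rw [inner_self_eq_norm_sq_to_K, hw.1 x]
        norm_num
      have hy : (inner ℂ (y:H) (y:H) : ℂ) = 1 := by
        rw [inner_self_eq_norm_sq_to_K, hw.1 y]
        norm_num
      rw [h1, hx, hy, hw.2 hne, hw.2 (Ne.symm hne)]
      norm_num
    have h2 : dist (x : H) (y : H) < 1.4 :=
      calc dist (x:H) (y:H) ≤ dist (x:H) (f x) + dist (f y) (y:H) := by
            rw [hxy]; exact dist_triangle _ _ _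
        _ < 0.7 + 0.7 := by
            have := hf2 y
            rw [dist_comm] at this
            exact add_lt_add (hf2 x) this
        _ = 1.4 := by norm_num
    nlinarith [dist_nonneg (x := (x:H)) (y := (y:H))]
  have hDcount : Countable ↥D := hDc.to_subtype
  exact Function.Injective.countable (f := fun x : w => (⟨f x, hf1 x⟩ : D))
    (fun x y hxy => hinj (congrArg Subtype.val hxy))

private lemma hs_of_finiteDimensional [FiniteDimensional ℂ H] (T : H →L[ℂ] H) :
    IsHilbertSchmidt T := by
  intro ι b
  have : Finite ι := (b.orthonormal.linearIndependent).finite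
  exact Summable.of_finite

private lemma basis_infinite (hfd : ¬FiniteDimensional ℂ H) {w : Set H}
    (b : HilbertBasis w ℂ H) : Infinite w := by
  rw [← not_finite_iff_infinite]
  intro hfin
  apply hfd
  have h1 : FiniteDimensional ℂ (Submodule.span ℂ (Set.range ⇑b)) :=
    FiniteDimensional.span_of_finite ℂ (Set.finite_range _)
  have h2 := b.dense_span
  rw [(Submodule.span ℂ
    (Set.range ⇑b)).closed_of_finiteDimensional.submodule_topologicalClosure_eq] at h2
  have h3 : FiniteDimensional ℂ (⊤ : Submodule ℂ H) := h2 ▸ h1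
  exact FiniteDimensional.of_injective (Submodule.topEquiv (R := ℂ) (M := H)).symm.toLinearMap
    (Submodule.topEquiv (R := ℂ) (M := H)).symm.injective

private lemma exists_isometries [TopologicalSpace.SeparableSpace H]
    (hfd : ¬FiniteDimensional ℂ H) :
    ∃ V₁ V₂ : H →L[ℂ] H,
      (∀ x y : H, (inner ℂ (V₁ x) (V₁ y) : ℂ) = inner ℂ x y) ∧
      (∀ x y : H, (inner ℂ (V₂ x) (V₂ y) : ℂ) = inner ℂ x y) ∧
      (∀ x y : H, (inner ℂ (V₁ x) (V₂ y) : ℂ) = 0) := by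
  obtain ⟨w, b, hb⟩ := exists_hilbertBasis ℂ H
  have horth : Orthonormal ℂ ((↑) : w → H) := hb ▸ b.orthonormal
  have hcount : Countable w := orth_countable horth
  have hinf : Infinite w := basis_infinite hfd b
  obtain ⟨d⟩ := nonempty_denumerable (↥w)
  let e : ℕ ≃ w := (Denumerable.eqv w).symm
  let g₁ : w → w := fun i => e (2 * e.symm i)
  let g₂ : w → w := fun i => e (2 * e.symm i + 1)
  have hg₁ : Function.Injective g₁ := by
    intro i j h
    have h2 := e.injective h
    have h3 : e.symm i = e.symm j := by omega
    exact e.symm.injective h3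
  have hg₂ : Function.Injective g₂ := by
    intro i j h
    have h2 := e.injective h
    have h3 : e.symm i = e.symm j := by omega
    exact e.symm.injective h3
  have hd : ∀ n m, g₁ n ≠ g₂ m := by
    intro n m h
    have h2 := e.injective h
    omega
  exact ⟨Vop b g₁ hg₁, Vop b g₂ hg₂, Vop_inner b g₁ hg₁, Vop_inner b g₂ hg₂,
    Vop_inner_disjoint b g₁ g₂ hg₁ hg₂ hd⟩

private lemma tc_mul_left (S : H →L[ℂ] H) {T : H →L[ℂ] H} (hT : IsTraceClass T) :
    IsTraceClass (S * T) := by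
  obtain ⟨P, Q, hP, hQ, rfl⟩ := hT
  exact ⟨S * P, Q, hs_mul_left S hP, hQ, rfl⟩

private lemma tc_mul_right {T : H →L[ℂ] H} (hT : IsTraceClass T) (S : H →L[ℂ] H) :
    IsTraceClass (T * S) := by
  obtain ⟨P, Q, hP, hQ, rfl⟩ := hT
  exact ⟨P, Q * S, hP, hs_mul_right hQ S, by rfl⟩

private lemma tc_add [TopologicalSpace.SeparableSpace H] {S T : H →L[ℂ] H}
    (hS : IsTraceClass S) (hT : IsTraceClass T) : IsTraceClass (S + T) := by
  by_cases hfd : FiniteDimensional ℂ H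
  · exact ⟨S + T, 1, hs_of_finiteDimensional _, hs_of_finiteDimensional _,
      ((S + T).comp_id).symm⟩
  obtain ⟨A₁, B₁, hA₁, hB₁, rfl⟩ := hS
  obtain ⟨A₂, B₂, hA₂, hB₂, rfl⟩ := hT
  obtain ⟨V₁, V₂, hV₁, hV₂, hV₁₂⟩ := exists_isometries hfd
  have e₁ : ContinuousLinearMap.adjoint V₁ * V₁ = 1 := by
    ext x
    refine ext_inner_left ℂ fun v => ?_
    rw [ContinuousLinearMap.mul_apply, ContinuousLinearMap.adjoint_inner_right, hV₁,
      ContinuousLinearMap.one_apply]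
  have e₂ : ContinuousLinearMap.adjoint V₂ * V₂ = 1 := by
    ext x
    refine ext_inner_left ℂ fun v => ?_
    rw [ContinuousLinearMap.mul_apply, ContinuousLinearMap.adjoint_inner_right, hV₂,
      ContinuousLinearMap.one_apply]
  have e₁₂ : ContinuousLinearMap.adjoint V₁ * V₂ = 0 := by
    ext x
    refine ext_inner_left ℂ fun v => ?_
    rw [ContinuousLinearMap.mul_apply, ContinuousLinearMap.adjoint_inner_right, hV₁₂,
      ContinuousLinearMap.zero_apply, inner_zero_right]
  have e₂₁ : ContinuousLinearMap.adjoint V₂ * V₁ = 0 := by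
    ext x
    refine ext_inner_left ℂ fun v => ?_
    rw [ContinuousLinearMap.mul_apply, ContinuousLinearMap.adjoint_inner_right,
      ContinuousLinearMap.zero_apply, inner_zero_right, ← inner_conj_symm, hV₁₂, map_zero]
  refine ⟨A₁ * ContinuousLinearMap.adjoint V₁ + A₂ * ContinuousLinearMap.adjoint V₂,
    V₁ * B₁ + V₂ * B₂,
    hs_add (hs_mul_right hA₁ _) (hs_mul_right hA₂ _),
    hs_add (hs_mul_left _ hB₁) (hs_mul_left _ hB₂), ?_⟩
  show A₁ ∘L B₁ + A₂ ∘L B₂ = _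
  have expand : (A₁ * ContinuousLinearMap.adjoint V₁ + A₂ * ContinuousLinearMap.adjoint V₂) ∘L
      (V₁ * B₁ + V₂ * B₂)
      = A₁ * (ContinuousLinearMap.adjoint V₁ * V₁) * B₁
        + A₁ * (ContinuousLinearMap.adjoint V₁ * V₂) * B₂
        + A₂ * (ContinuousLinearMap.adjoint V₂ * V₁) * B₁
        + A₂ * (ContinuousLinearMap.adjoint V₂ * V₂) * B₂ := by
    show (A₁ * ContinuousLinearMap.adjoint V₁ + A₂ * ContinuousLinearMap.adjoint V₂) *
      (V₁ * B₁ + V₂ * B₂) = _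
    noncomm_ring
  rw [expand, e₁, e₂, e₁₂, e₂₁]
  simp only [mul_one, mul_zero, zero_mul, add_zero, zero_add]
  rfl

private lemma tc_neg {T : H →L[ℂ] H} (hT : IsTraceClass T) : IsTraceClass (-T) := by
  have := tc_mul_left (-1) hT
  rwa [neg_one_mul] at this

private lemma tc_sub [TopologicalSpace.SeparableSpace H] {S T : H →L[ℂ] H}
    (hS : IsTraceClass S) (hT : IsTraceClass T) : IsTraceClass (S - T) := by
  rw [sub_eq_add_neg]
  exact tc_add hS (tc_neg hT)

end Lemmas
/-- **Lemma 2.1, first part.** Under the hypotheses of the main theorem, if `A = U·|A|`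
is the polar decomposition of `A` (here `R = |A|` is the positive square root of `A*A`),
then `U` is unitary, `|A|` is invertible, and `(|A|−I)(B−I)`, `(B−I)(|A|−I)`,
`(U−I)(B−I)`, `(B−I)(U−I)` are all trace class. -/
theorem polar_decomposition_traceClass [TopologicalSpace.SeparableSpace H]
    (A B U R : H →L[ℂ] H) (hA : IsUnit A) (hB : IsUnit B)
    (h1 : IsTraceClass ((A - 1) * (B - 1)))
    (h2 : IsTraceClass ((B - 1) * (A - 1)))
    (h3 : IsTraceClass ((ContinuousLinearMap.adjoint A - 1) * (B - 1)))
    (h4 : IsTraceClass ((B - 1) * (ContinuousLinearMap.adjoint A - 1)))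
    (hR : R.IsPositive) (hR2 : R * R = ContinuousLinearMap.adjoint A * A)
    (hpolar : A = U * R) :
    U ∈ unitary (H →L[ℂ] H) ∧ IsUnit R ∧
      IsTraceClass ((R - 1) * (B - 1)) ∧ IsTraceClass ((B - 1) * (R - 1)) ∧
      IsTraceClass ((U - 1) * (B - 1)) ∧ IsTraceClass ((B - 1) * (U - 1)) := by
  -- `R` is invertible
  have hAs : IsUnit (ContinuousLinearMap.adjoint A) := by
    have := hA.star
    rwa [ContinuousLinearMap.star_eq_adjoint] at this
  have hRR : IsUnit (R * R) := hR2 ▸ hAs.mul hA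
  obtain ⟨u, hu⟩ := hRR
  have hcommu : Commute R ↑u := by
    rw [Commute, SemiconjBy, hu]
    noncomm_ring
  have hcomm : R * ↑u⁻¹ = ↑u⁻¹ * R := (hcommu.units_inv_right).eq
  have hRunit : IsUnit R := isUnit_iff_exists.mpr ⟨R * ↑u⁻¹,
    by rw [← mul_assoc, ← hu, u.mul_inv],
    by rw [hcomm, mul_assoc, ← hu, u.inv_mul]⟩
  set r := hRunit.unit with hrdef
  have hr : (↑r : H →L[ℂ] H) = R := hRunit.unit_spec
  set Sop := (↑r⁻¹ : H →L[ℂ] H) with hSdef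
  have hSR : Sop * R = 1 := by rw [← hr]; exact r.inv_mul
  have hRS : R * Sop = 1 := by rw [← hr]; exact r.mul_inv
  -- self-adjointness
  have hRsa : star R = R := hR.isSelfAdjoint.star_eq
  have hSsa : star Sop = Sop := by
    have hstar : star Sop * R = 1 := by
      calc star Sop * R = star Sop * star R := by rw [hRsa]
        _ = star (R * Sop) := by rw [star_mul]
        _ = 1 := by rw [hRS, star_one]
    calc star Sop = star Sop * (R * Sop) := by rw [hRS, mul_one]
      _ = (star Sop * R) * Sop := by rw [mul_assoc]
      _ = Sop := by rw [hstar, one_mul]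
  -- `U` is unitary
  have hU : U = A * Sop := by
    have h5 : A * Sop = (U * R) * Sop := by rw [← hpolar]
    rw [h5, mul_assoc, hRS, mul_one]
  have hstarU : star U * U = 1 := by
    rw [hU, star_mul]
    calc star Sop * star A * (A * Sop) = star Sop * (star A * A) * Sop := by noncomm_ring
      _ = star Sop * (R * R) * Sop := by
          rw [show star A = ContinuousLinearMap.adjoint A from
            ContinuousLinearMap.star_eq_adjoint A, ← hR2]
      _ = Sop * (R * R) * Sop := by rw [hSsa]
      _ = (Sop * R) * (R * Sop) := by noncomm_ring
      _ = 1 := by rw [hSR, hRS, one_mul]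
  have hUunit : IsUnit U := hU ▸ hA.mul r⁻¹.isUnit
  have hUstar : U * star U = 1 := by
    obtain ⟨v, hv⟩ := hUunit
    have h6 : star U = ↑v⁻¹ := by
      calc star U = star U * (↑v * ↑v⁻¹) := by rw [v.mul_inv, mul_one]
        _ = (star U * ↑v) * ↑v⁻¹ := by rw [mul_assoc]
        _ = ↑v⁻¹ := by rw [hv, hstarU, one_mul]
    rw [h6, ← hv, v.mul_inv]
  have hUmem : U ∈ unitary (H →L[ℂ] H) := Unitary.mem_iff.mpr ⟨hstarU, hUstar⟩
  -- `1 + R` is invertible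
  have h1R : IsUnit (1 + R) := by
    refine ContinuousLinearMap.isUnit_of_forall_le_norm_inner_map (1 + R) (c := 1) one_pos
      fun x => ?_
    have hap : ((1 + R : H →L[ℂ] H) x) = x + R x := by
      rw [ContinuousLinearMap.add_apply, ContinuousLinearMap.one_apply]
    calc ‖x‖ ^ 2 * ((1 : NNReal) : ℝ) = ‖x‖ ^ 2 := by norm_num
      _ ≤ RCLike.re (inner ℂ ((1 + R : H →L[ℂ] H) x) x : ℂ) := by
          rw [hap, inner_add_left, map_add]
          have hpos := hR.inner_nonneg_left x
          have hxx : RCLike.re (inner ℂ x x : ℂ) = ‖x‖ ^ 2 := inner_self_eq_norm_sq x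
          rw [hxx]
          exact le_add_of_nonneg_right (Complex.nonneg_iff.mp hpos).1
      _ ≤ ‖(inner ℂ ((1 + R : H →L[ℂ] H) x) x : ℂ)‖ := RCLike.re_le_norm _
  set w1 := h1R.unit with hw1def
  have hw1 : (↑w1 : H →L[ℂ] H) = 1 + R := h1R.unit_spec
  set Wop := (↑w1⁻¹ : H →L[ℂ] H) with hWdef
  have hW1 : Wop * (1 + R) = 1 := by rw [← hw1]; exact w1.inv_mul
  have hW2 : (1 + R) * Wop = 1 := by rw [← hw1]; exact w1.mul_inv
  -- trace class of `(A*A - 1)(B - 1)`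
  have hX₀ : IsTraceClass ((ContinuousLinearMap.adjoint A * A - 1) * (B - 1)) := by
    have hid : (ContinuousLinearMap.adjoint A * A - 1) * (B - 1)
        = ContinuousLinearMap.adjoint A * ((A - 1) * (B - 1))
          + (ContinuousLinearMap.adjoint A - 1) * (B - 1) := by noncomm_ring
    rw [hid]
    exact tc_add (tc_mul_left _ h1) h3
  -- trace class of `(R-1)(B-1)`
  have tcP : IsTraceClass ((R - 1) * (B - 1)) := by
    have hid : (R - 1) * (B - 1)
        = Wop * ((ContinuousLinearMap.adjoint A * A - 1) * (B - 1)) := by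
      have hfac : (1 + R) * (R - 1) = ContinuousLinearMap.adjoint A * A - 1 := by
        rw [← hR2]; noncomm_ring
      calc (R - 1) * (B - 1) = (Wop * (1 + R)) * ((R - 1) * (B - 1)) := by
            rw [hW1, one_mul]
        _ = Wop * (((1 + R) * (R - 1)) * (B - 1)) := by noncomm_ring
        _ = _ := by rw [hfac]
    rw [hid]
    exact tc_mul_left _ hX₀
  -- trace class of `(B-1)(R-1)`
  have tcQ : IsTraceClass ((B - 1) * (R - 1)) := by
    have hid : (B - 1) * (R - 1)
        = (((B - 1) * (ContinuousLinearMap.adjoint A - 1)) * A + (B - 1) * (A - 1)) * Wop := by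
      have hfac : (R - 1) * (1 + R) = ContinuousLinearMap.adjoint A * A - 1 := by
        rw [← hR2]; noncomm_ring
      calc (B - 1) * (R - 1) = ((B - 1) * (R - 1)) * ((1 + R) * Wop) := by
            rw [hW2, mul_one]
        _ = ((B - 1) * ((R - 1) * (1 + R))) * Wop := by noncomm_ring
        _ = ((B - 1) * (ContinuousLinearMap.adjoint A * A - 1)) * Wop := by rw [hfac]
        _ = _ := by noncomm_ring
    rw [hid]
    exact tc_mul_right (tc_add (tc_mul_right h4 A) h2) _
  -- commutation of `Sop` past `(B-1)` modulo trace class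
  have hcommS : Sop * (B - 1) = (B - 1) * Sop
      + Sop * ((B - 1) * (R - 1) - (R - 1) * (B - 1)) * Sop := by
    have e1 : R * (Sop * (B - 1)) * R = (B - 1) * R := by
      rw [← mul_assoc R Sop, hRS, one_mul]
    have e2 : R * ((B - 1) * Sop
        + Sop * ((B - 1) * (R - 1) - (R - 1) * (B - 1)) * Sop) * R = (B - 1) * R := by
      have t1 : R * ((B - 1) * Sop) * R = R * (B - 1) := by
        calc R * ((B - 1) * Sop) * R = R * (B - 1) * (Sop * R) := by noncomm_ring
          _ = R * (B - 1) := by rw [hSR, mul_one]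
      have t2 : R * (Sop * ((B - 1) * (R - 1) - (R - 1) * (B - 1)) * Sop) * R
          = (B - 1) * (R - 1) - (R - 1) * (B - 1) := by
        calc R * (Sop * ((B - 1) * (R - 1) - (R - 1) * (B - 1)) * Sop) * R
            = (R * Sop) * ((B - 1) * (R - 1) - (R - 1) * (B - 1)) * (Sop * R) := by noncomm_ring
          _ = _ := by rw [hRS, hSR, one_mul, mul_one]
      calc R * ((B - 1) * Sop + Sop * ((B - 1) * (R - 1) - (R - 1) * (B - 1)) * Sop) * R
          = R * ((B - 1) * Sop) * R
            + R * (Sop * ((B - 1) * (R - 1) - (R - 1) * (B - 1)) * Sop) * R := by noncomm_ring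
        _ = R * (B - 1) + ((B - 1) * (R - 1) - (R - 1) * (B - 1)) := by rw [t1, t2]
        _ = (B - 1) * R := by noncomm_ring
    have e3 : R * (Sop * (B - 1)) * R = R * ((B - 1) * Sop
        + Sop * ((B - 1) * (R - 1) - (R - 1) * (B - 1)) * Sop) * R := e1.trans e2.symm
    have e4 := hRunit.mul_right_cancel e3
    exact hRunit.mul_left_cancel e4
  have hU1 : U - 1 = (A - R) * Sop := by
    rw [hU, sub_mul, hRS]
  -- trace class of `(U-1)(B-1)`
  have tcU1 : IsTraceClass ((U - 1) * (B - 1)) := by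
    have hmain : (U - 1) * (B - 1)
        = ((A - 1) * (B - 1) - (R - 1) * (B - 1)) * Sop
          + ((A - R) * Sop) * ((B - 1) * (R - 1) - (R - 1) * (B - 1)) * Sop := by
      rw [hU1, mul_assoc, hcommS]
      noncomm_ring
    rw [hmain]
    exact tc_add (tc_mul_right (tc_sub h1 tcP) _)
      (tc_mul_right (tc_mul_left _ (tc_sub tcQ tcP)) _)
  -- trace class of `(B-1)(U-1)`
  have tcU2 : IsTraceClass ((B - 1) * (U - 1)) := by
    have hmain : (B - 1) * (U - 1) = ((B - 1) * (A - 1) - (B - 1) * (R - 1)) * Sop := by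
      rw [hU1]; noncomm_ring
    rw [hmain]
    exact tc_mul_right (tc_sub h2 tcQ) _
  exact ⟨hUmem, hRunit, tcP, tcQ, tcU1, tcU2⟩
end
end

section
/- Let A be a bounded normal operator and B a bounded operator on a complex separable Hilbert space H such that (e^A − I)(e^B − I) and (e^B − I)(e^A − I) are trace class. Let P = χ_{2πiℤ}(A) be the spectral projection of A onto the lattice 2πiℤ. Then (e^{AP} − I)(e^B − I) = P(e^A − I)(e^B − I) is trace class, the commutator [e^{AP}, e^B] = [P(e^A − I), e^B − I] is trace class, and e^{AP} = I. -/
open Filter NormedSpace ContinuousLinearMap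
open scoped Topology

noncomputable section

variable {H : Type} [NormedAddCommGroup H] [InnerProductSpace ℂ H] [CompleteSpace H]

/-- **Second part of the proof of Lemma 2.4.** Let `A` be normal and `B` bounded with
`(e^A−I)(e^B−I)`, `(e^B−I)(e^A−I)` trace class, and let `P = χ_{2πiℤ}(A)` — formalized
as an orthogonal projection commuting with `A` and `A*` such that the spectrum of `AP`
lies in `2πiℤ`. Then `(e^{AP}−I)(e^B−I) = P(e^A−I)(e^B−I)` is trace class, the
commutator `[e^{AP}, e^B] = [P(e^A−I), e^B−I]` is trace class, and `e^{AP} = I`. -/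
theorem spectral_projection_onto_lattice [TopologicalSpace.SeparableSpace H]
    (A B P : H →L[ℂ] H) (hA : IsStarNormal A)
    (h1 : IsTraceClass ((exp A - 1) * (exp B - 1)))
    (h2 : IsTraceClass ((exp B - 1) * (exp A - 1)))
    (hPsa : IsSelfAdjoint P) (hPidem : P * P = P)
    (hPA : A * P = P * A)
    (hPA' : ContinuousLinearMap.adjoint A * P = P * ContinuousLinearMap.adjoint A)
    (hspec : spectrum ℂ (A * P) ⊆
      {z : ℂ | ∃ k : ℤ, z = 2 * (Real.pi : ℂ) * Complex.I * (k : ℂ)}) :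
    (exp (A * P) - 1) * (exp B - 1) = P * (exp A - 1) * (exp B - 1) ∧
      IsTraceClass ((exp (A * P) - 1) * (exp B - 1)) ∧
      exp (A * P) * exp B - exp B * exp (A * P)
        = (P * (exp A - 1)) * (exp B - 1) - (exp B - 1) * (P * (exp A - 1)) ∧
      IsTraceClass (exp (A * P) * exp B - exp B * exp (A * P)) ∧
      exp (A * P) = 1 := by
  -- `star A * P = P * star A` phrased via `star`
  have h1 : star A * P = P * star A := by
    rw [ContinuousLinearMap.star_eq_adjoint]; exact hPA'
  -- `A * P` is normal
  have hN : IsStarNormal (A * P) := by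
    constructor
    show star (A * P) * (A * P) = A * P * star (A * P)
    rw [star_mul, hPsa.star_eq]
    calc P * star A * (A * P)
        = P * star A * A * P := by rw [← mul_assoc]
      _ = star A * P * A * P := by rw [← h1]
      _ = star A * (P * A) * P := by rw [mul_assoc (star A)]
      _ = star A * (A * P) * P := by rw [← hPA]
      _ = star A * A * (P * P) := by rw [← mul_assoc, mul_assoc (star A * A)]
      _ = A * star A * P := by rw [hPidem, hA.star_comm_self.eq]
      _ = A * (P * star A) := by rw [mul_assoc, h1]
      _ = A * P * (P * star A) := by rw [mul_assoc A P, ← mul_assoc P P, hPidem]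
  -- `exp (A * P) = 1` via the continuous functional calculus
  have key : exp (A * P) = 1 := by
    have : exp (A * P) = cfc (fun _ => (1 : ℂ)) (A * P) := by
      rw [← CFC.complex_exp_eq_normedSpace_exp]
      refine cfc_congr fun z hz => ?_
      obtain ⟨k, rfl⟩ := hspec hz
      simpa [mul_comm, mul_assoc, mul_left_comm] using Complex.exp_int_mul_two_pi_mul_I k
    rw [this, cfc_const (1 : ℂ) (A * P) hN, map_one]
  -- `exp (A * P) - 1 = P * (exp A - 1)` via the exponential series
  have e : exp (A * P) - 1 = P * (exp A - 1) := by
    have hC : Commute A P := hPA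
    have Ppow : ∀ n : ℕ, P ^ (n + 1) = P := by
      intro n
      induction n with
      | zero => simp
      | succ k ih => rw [pow_succ, ih, hPidem]
    set g : ℕ → (H →L[ℂ] H) := fun n => ((Nat.factorial n : ℂ))⁻¹ • (A * P) ^ n with hg
    set h : ℕ → (H →L[ℂ] H) := fun n => ((Nat.factorial n : ℂ))⁻¹ • (A ^ n * P) with hh
    have hgs : Summable g := expSeries_summable' (𝕂 := ℂ) (A * P)
    have hhs : Summable h := by
      have : h = fun n => (((Nat.factorial n : ℂ))⁻¹ • A ^ n) * P := by
        funext n; simp [hh, smul_mul_assoc]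
      rw [this]
      exact (expSeries_summable' (𝕂 := ℂ) A).mul_right P
    have hgh : ∀ n : ℕ, g (n + 1) = h (n + 1) := by
      intro n
      simp only [hg, hh, hC.mul_pow, Ppow]
    have e1 : exp (A * P) = 1 + ∑' n, h (n + 1) := by
      rw [exp_eq_tsum ℂ]
      show ∑' n, g n = _
      rw [hgs.tsum_eq_zero_add]
      simp only [hgh]
      simp [hg]
    have e2 : P * exp A = P + ∑' n, h (n + 1) := by
      have hPexp : P * exp A = ∑' n, h n := by
        rw [exp_eq_tsum ℂ]
        show P * ∑' n, ((Nat.factorial n : ℂ))⁻¹ • A ^ n = _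
        rw [← Summable.tsum_mul_left P (expSeries_summable' (𝕂 := ℂ) A)]
        congr 1
        funext n
        simp only [hh, mul_smul_comm, (hC.symm.pow_right n).eq]
      rw [hPexp, hhs.tsum_eq_zero_add]
      simp [hh]
    rw [e1, mul_sub, mul_one, e2]
    abel
  have hP0 : P * (exp A - 1) = 0 := by rw [← e, key, sub_self]
  have hs0 : IsHilbertSchmidt (0 : H →L[ℂ] H) := by
    intro ι b
    simpa using summable_zero
  have tc0 : IsTraceClass (0 : H →L[ℂ] H) := ⟨0, 0, hs0, hs0, by simp⟩
  refine ⟨by rw [e], ?_, ?_, ?_, key⟩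
  · rw [key, sub_self, zero_mul]
    exact tc0
  · rw [key, hP0, one_mul, mul_one, sub_self, zero_mul, mul_zero, sub_self]
  · rw [key, one_mul, mul_one, sub_self]
    exact tc0
end
end

section
/- Let L be the backward shift on ℓ²(ℕ) and let M be the diagonal multiplication operator with Me_n = n^{−1/2} e_n for even n and Me_n = 0 for odd n. Set C = ML. Then C² = 0 (so C is nilpotent and e^C − I = C), the products (e^C − I)(e^C − I) are trace class (indeed zero), det(e^C e^C e^{−C} e^{−C}) = 1, but (e^C − I)(e^{C*} − I) = CC* = M² is not trace class. Thus the adjoint condition (iii) in the main theorem is sufficient but not necessary. -/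
open Filter NormedSpace ContinuousLinearMap
open scoped Topology ENNReal NNReal

noncomputable section

variable {H : Type} [NormedAddCommGroup H] [InnerProductSpace ℂ H] [CompleteSpace H]

/-- exp of a square-zero element. -/
theorem exp_of_sq_eq_zero {𝔸 : Type*} [NormedRing 𝔸] [NormedAlgebra ℂ 𝔸] {x : 𝔸}
    (h : x * x = 0) : exp x = 1 + x := by
  have hE : exp x = ∑' n : ℕ, ((n.factorial : ℂ))⁻¹ • x ^ n := congrFun (NormedSpace.exp_eq_tsum ℂ) x
  rw [hE]
  have hpow : ∀ n, 2 ≤ n → x ^ n = 0 := by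
    intro n hn
    have hx : x ^ n = x ^ 2 * x ^ (n - 2) := by rw [← pow_add]; congr 1; omega
    rw [hx, pow_two, h, zero_mul]
  rw [tsum_eq_sum (s := Finset.range 2) (fun n hn => by
    rw [hpow n (by simp at hn; omega), smul_zero])]
  simp [Finset.sum_range_succ]

abbrev E2 : Type := lp (fun _ : ℕ => ℂ) 2

/-- the shifted sequence -/
def shf (f : ℕ → ℂ) : ℕ → ℂ
  | 0 => 0
  | (n+1) => f n

lemma memℓp_shf (f : E2) : Memℓp (shf f) 2 := by
  apply memℓp_gen
  have hs : Summable fun n => ‖(f : ℕ → ℂ) n‖ ^ (2 : ℝ≥0∞).toReal :=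
    (lp.memℓp f).summable (by norm_num)
  apply (summable_nat_add_iff 1).mp
  simpa [shf] using hs

lemma tsum_shf (g : ℕ → ℂ) (t : ℝ) (ht : 0 < t) :
    ∑' n, ‖shf g n‖ ^ t = ∑' n, ‖g n‖ ^ t := by
  have hinj : Function.Injective Nat.succ := Nat.succ_injective
  have hsupp : Function.support (fun n => ‖shf g n‖ ^ t) ⊆ Set.range Nat.succ := by
    intro n hn
    rcases n with _ | m
    · simp [shf, Real.zero_rpow (ne_of_gt ht)] at hn
    · exact ⟨m, rfl⟩
  calc ∑' n, ‖shf g n‖ ^ t = ∑' n, ‖shf g (Nat.succ n)‖ ^ t :=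
        (hinj.tsum_eq hsupp).symm
    _ = ∑' n, ‖g n‖ ^ t := by simp [shf]

def RopFun (f : E2) : E2 := ⟨shf f, memℓp_shf f⟩

@[simp] lemma RopFun_apply (f : E2) (n : ℕ) : (RopFun f : ℕ → ℂ) n = shf (⇑f) n := rfl

lemma RopFun_norm (f : E2) : ‖RopFun f‖ = ‖f‖ := by
  have h2 : (0:ℝ) < (2 : ℝ≥0∞).toReal := by norm_num
  have h1 := lp.norm_eq_tsum_rpow h2 (RopFun f)
  have h2' := lp.norm_eq_tsum_rpow h2 f
  rw [h1, h2']
  congr 1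
  exact tsum_shf (⇑f) _ (by norm_num)

def Rop : E2 →L[ℂ] E2 :=
  LinearMap.mkContinuous
    { toFun := RopFun
      map_add' := fun f g => by
        apply lp.ext; funext n
        rcases n with _ | m <;> simp [shf]
      map_smul' := fun c f => by
        apply lp.ext; funext n
        rcases n with _ | m <;> simp [shf] }
    1 (fun f => by simpa using (RopFun_norm f).le)

@[simp] lemma Rop_apply (f : E2) (n : ℕ) : (Rop f : ℕ → ℂ) n = shf (⇑f) n := rfl


/-- Parseval for a Hilbert basis, real form. -/
lemma parseval_sq (e : HilbertBasis ℕ ℂ H) (x : H) :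
    ∑' m, ‖(inner ℂ (e m) x : ℂ)‖ ^ 2 = ‖x‖ ^ 2 := by
  have h2 : (0:ℝ) < (2 : ℝ≥0∞).toReal := by norm_num
  have h1 := lp.norm_rpow_eq_tsum h2 (e.repr x)
  have hnorm : ‖e.repr x‖ = ‖x‖ := e.repr.norm_map x
  have hco : ∀ m, ‖(e.repr x : ℕ → ℂ) m‖ = ‖(inner ℂ (e m) x : ℂ)‖ := by
    intro m; rw [e.repr_apply_apply]
  have ht : ((2 : ℝ≥0∞).toReal) = (2:ℝ) := by norm_num
  calc ∑' m, ‖(inner ℂ (e m) x : ℂ)‖ ^ 2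
      = ∑' m, ‖(e.repr x : ℕ → ℂ) m‖ ^ (2 : ℝ≥0∞).toReal := by
        refine tsum_congr fun m => ?_
        rw [hco, ht, Real.rpow_two]
    _ = ‖e.repr x‖ ^ (2 : ℝ≥0∞).toReal := h1.symm
    _ = ‖x‖ ^ 2 := by rw [hnorm, ht, Real.rpow_two]

lemma parseval_summable (e : HilbertBasis ℕ ℂ H) (x : H) :
    Summable fun m => ‖(inner ℂ (e m) x : ℂ)‖ ^ 2 := by
  have hs := (lp.memℓp (e.repr x)).summable (p := 2) (by norm_num)
  have ht : ((2 : ℝ≥0∞).toReal) = (2:ℝ) := by norm_num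
  refine hs.congr fun m => ?_
  rw [e.repr_apply_apply, ht, Real.rpow_two]

lemma ofReal_parseval (e : HilbertBasis ℕ ℂ H) (x : H) :
    ∑' m, ENNReal.ofReal (‖(inner ℂ (e m) x : ℂ)‖ ^ 2) = ENNReal.ofReal (‖x‖ ^ 2) := by
  rw [← parseval_sq e x, ENNReal.ofReal_tsum_of_nonneg (fun m => by positivity)
    (parseval_summable e x)]

/-- if `A` is Hilbert–Schmidt w.r.t. `e`, so is its adjoint. -/
lemma hs_adjoint_s17 (A : H →L[ℂ] H) (e : HilbertBasis ℕ ℂ H)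
    (hA : Summable fun n => ‖A (e n)‖ ^ 2) :
    Summable fun n => ‖ContinuousLinearMap.adjoint A (e n)‖ ^ 2 := by
  set A' := ContinuousLinearMap.adjoint A with hA'
  have hswap : ∀ n m, ‖(inner ℂ (e m) (A' (e n)) : ℂ)‖ = ‖(inner ℂ (e n) (A (e m)) : ℂ)‖ := by
    intro n m
    rw [hA', ContinuousLinearMap.adjoint_inner_right, norm_inner_symm]
  have hkey : ∑' n, ENNReal.ofReal (‖A' (e n)‖ ^ 2) ≠ ⊤ := by
    have h1 : ∑' n, ENNReal.ofReal (‖A' (e n)‖ ^ 2)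
        = ∑' (n) (m), ENNReal.ofReal (‖(inner ℂ (e m) (A' (e n)) : ℂ)‖ ^ 2) := by
      refine tsum_congr fun n => ?_
      rw [ofReal_parseval e (A' (e n))]
    have h2 : ∑' (n) (m), ENNReal.ofReal (‖(inner ℂ (e m) (A' (e n)) : ℂ)‖ ^ 2)
        = ∑' (m) (n), ENNReal.ofReal (‖(inner ℂ (e m) (A' (e n)) : ℂ)‖ ^ 2) :=
      ENNReal.tsum_comm
    have h3 : ∑' (m) (n), ENNReal.ofReal (‖(inner ℂ (e m) (A' (e n)) : ℂ)‖ ^ 2)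
        = ∑' m, ENNReal.ofReal (‖A (e m)‖ ^ 2) := by
      refine tsum_congr fun m => ?_
      have : ∀ n, ENNReal.ofReal (‖(inner ℂ (e m) (A' (e n)) : ℂ)‖ ^ 2)
          = ENNReal.ofReal (‖(inner ℂ (e n) (A (e m)) : ℂ)‖ ^ 2) := fun n => by rw [hswap]
      rw [tsum_congr this, ofReal_parseval e (A (e m))]
    have h4 : ∑' m, ENNReal.ofReal (‖A (e m)‖ ^ 2) ≠ ⊤ := by
      rw [← ENNReal.ofReal_tsum_of_nonneg (fun m => by positivity) hA]
      exact ENNReal.ofReal_ne_top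
    rw [h1, h2, h3]; exact h4
  -- convert finiteness into summability
  have h5 : ∀ n, ENNReal.ofReal (‖A' (e n)‖ ^ 2)
      = ((Real.toNNReal (‖A' (e n)‖ ^ 2) : ℝ≥0) : ℝ≥0∞) := fun n => rfl
  rw [tsum_congr h5] at hkey
  have h6 := ENNReal.tsum_coe_ne_top_iff_summable.mp hkey
  have h7 := NNReal.summable_coe.mpr h6
  refine h7.congr fun n => ?_
  simp [Real.coe_toNNReal _ (by positivity : (0:ℝ) ≤ ‖A' (e n)‖ ^ 2)]

lemma isTraceClass_zero : IsTraceClass (0 : H →L[ℂ] H) := by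
  refine ⟨0, 0, ?_, ?_, by simp⟩ <;>
  · intro ι b
    simpa using summable_zero


set_option maxHeartbeats 1000000 in
/-- **Example 2.5.** Let `L` be the backward shift on `ℓ²(ℕ)` and `M` the diagonal
operator with entries `n^{−1/2}` at even `n ≠ 0` and `0` otherwise, and set `C = ML`.
Then `C² = 0`, `e^C − I = C`, `(e^C−I)(e^C−I)` is trace class,
`det (e^C e^C e^{−C} e^{−C}) = 1`, but `(e^C−I)(e^{C*}−I) = CC* = M²` is not trace
class: condition (iii) of Theorem 1.2 is sufficient but not necessary. -/
theorem adjoint_condition_not_necessary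
    (L M : lp (fun _ : ℕ => ℂ) 2 →L[ℂ] lp (fun _ : ℕ => ℂ) 2)
    (hL : ∀ (f : lp (fun _ : ℕ => ℂ) 2) (n : ℕ), L f n = f (n + 1))
    (hM : ∀ (f : lp (fun _ : ℕ => ℂ) 2) (n : ℕ),
      M f n = if Even n ∧ n ≠ 0 then (((Real.sqrt n)⁻¹ : ℝ) : ℂ) * f n else 0) :
    (M * L) * (M * L) = 0 ∧
      exp (M * L) - 1 = M * L ∧
      IsTraceClass ((exp (M * L) - 1) * (exp (M * L) - 1)) ∧
      HasFredholmDet (exp (M * L) * exp (M * L)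
        * exp (-(M * L)) * exp (-(M * L))) 1 ∧
      (exp (M * L) - 1) * (exp (ContinuousLinearMap.adjoint (M * L)) - 1)
        = (M * L) * ContinuousLinearMap.adjoint (M * L) ∧
      (M * L) * ContinuousLinearMap.adjoint (M * L) = M * M ∧
      ¬ IsTraceClass (M * M) := by
  -- the action of `C = M * L` on coordinates
  have hC : ∀ (f : lp (fun _ : ℕ => ℂ) 2) (n : ℕ),
      ((M * L) f) n = if Even n ∧ n ≠ 0 then (((Real.sqrt n)⁻¹ : ℝ) : ℂ) * f (n+1) else 0 := by
    intro f n
    rw [ContinuousLinearMap.mul_apply, hM, hL]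
  -- C² = 0
  have hC2 : (M * L) * (M * L) = 0 := by
    refine ContinuousLinearMap.ext fun f => ?_
    apply lp.ext; funext n
    rw [ContinuousLinearMap.mul_apply]
    show ((M * L) ((M * L) f)) n = (0 : lp (fun _ : ℕ => ℂ) 2) n
    rw [hC, hC]
    rcases Nat.even_or_odd n with he | ho
    · rcases eq_or_ne n 0 with rfl | hn
      · simp [lp.coeFn_zero]
      · have : ¬ (Even (n+1) ∧ n+1 ≠ 0) := by
          rintro ⟨h1, -⟩
          exact (Nat.not_even_iff_odd.mpr (Even.add_one he)) h1
        simp [he, hn, this, lp.coeFn_zero]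
    · have : ¬ (Even n ∧ n ≠ 0) := fun h => (Nat.not_even_iff_odd.mpr ho) h.1
      simp [this, lp.coeFn_zero]
  have hexpC : exp (M * L) = 1 + (M * L) := exp_of_sq_eq_zero hC2
  have hC2' : (-(M * L)) * (-(M * L)) = 0 := by rw [neg_mul_neg, hC2]
  have hexpC' : exp (-(M * L)) = 1 + -(M * L) := exp_of_sq_eq_zero hC2'
  have hsub : exp (M * L) - 1 = M * L := by rw [hexpC, add_sub_cancel_left]
  -- the adjoint is also square-zero
  have hD2 : (ContinuousLinearMap.adjoint (M * L)) * (ContinuousLinearMap.adjoint (M * L)) = 0 := by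
    rw [← ContinuousLinearMap.star_eq_adjoint, ← star_mul, hC2, star_zero]
  have hexpD : exp (ContinuousLinearMap.adjoint (M * L))
      = 1 + ContinuousLinearMap.adjoint (M * L) := exp_of_sq_eq_zero hD2
  -- the product of exponentials is 1
  have hprod : exp (M * L) * exp (M * L) * exp (-(M * L)) * exp (-(M * L)) = 1 := by
    rw [hexpC, hexpC']
    have h := hC2
    simp only [mul_add, add_mul, mul_one, one_mul, mul_neg, neg_mul, neg_neg, hC2,
      neg_zero, add_zero, zero_add]
    abel
  -- M is self-adjoint
  have hMsa : M = ContinuousLinearMap.adjoint M := by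
    rw [ContinuousLinearMap.eq_adjoint_iff]
    intro x y
    rw [lp.inner_eq_tsum, lp.inner_eq_tsum]
    refine tsum_congr fun n => ?_
    rw [hM, hM]
    by_cases h : Even n ∧ n ≠ 0
    · rw [if_pos h, if_pos h]
      simp only [RCLike.inner_apply, map_mul, Complex.conj_ofReal]
      ring
    · rw [if_neg h, if_neg h]
      simp [RCLike.inner_apply]
  -- the adjoint of L is Rop
  have hRL : Rop = ContinuousLinearMap.adjoint L := by
    rw [ContinuousLinearMap.eq_adjoint_iff]
    intro x y
    rw [lp.inner_eq_tsum, lp.inner_eq_tsum]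
    have hsupp : Function.support (fun n => (inner ℂ ((Rop x : ℕ → ℂ) n) ((y : ℕ → ℂ) n) : ℂ))
        ⊆ Set.range Nat.succ := by
      intro n hn
      rcases n with _ | m
      · simp [shf, RCLike.inner_apply] at hn
      · exact ⟨m, rfl⟩
    calc ∑' n, (inner ℂ ((Rop x : ℕ → ℂ) n) ((y : ℕ → ℂ) n) : ℂ)
        = ∑' n, (inner ℂ ((Rop x : ℕ → ℂ) (Nat.succ n)) ((y : ℕ → ℂ) (Nat.succ n)) : ℂ) :=
          (Nat.succ_injective.tsum_eq hsupp).symm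
      _ = ∑' n, (inner ℂ ((x : ℕ → ℂ) n) ((L y : ℕ → ℂ) n) : ℂ) := by
          refine tsum_congr fun n => ?_
          rw [hL]
          rfl
  -- C C* = M²
  have hCC : (M * L) * ContinuousLinearMap.adjoint (M * L) = M * M := by
    have h1 : ContinuousLinearMap.adjoint (M * L)
        = ContinuousLinearMap.adjoint L * ContinuousLinearMap.adjoint M :=
      ContinuousLinearMap.adjoint_comp M L
    have hLR : L * Rop = 1 := by
      refine ContinuousLinearMap.ext fun f => ?_
      apply lp.ext; funext n
      rw [ContinuousLinearMap.mul_apply]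
      show (L (Rop f)) n = (f : ℕ → ℂ) n
      rw [hL]
      rfl
    rw [h1, ← hRL, ← hMsa]
    calc (M * L) * (Rop * M) = M * (L * Rop) * M := by
          rw [mul_assoc M L (Rop * M), ← mul_assoc L Rop M, ← mul_assoc M (L * Rop) M]
      _ = M * M := by rw [hLR, mul_one]
  refine ⟨hC2, hsub, ?_, ?_, ?_, hCC, ?_⟩
  · -- trace class of (e^C-1)²
    rw [hsub, hC2]
    exact isTraceClass_zero
  · -- Fredholm determinant
    constructor
    · rw [hprod, sub_self]
      exact isTraceClass_zero
    · intro ι b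
      classical
      have hone : ∀ s : Finset ι,
          Matrix.det (Matrix.of fun i j : s =>
            (inner ℂ (b (i : ι)) ((exp (M * L) * exp (M * L)
              * exp (-(M * L)) * exp (-(M * L))) (b (j : ι))) : ℂ)) = 1 := by
        intro s
        have hmat : (Matrix.of fun i j : s =>
            (inner ℂ (b (i : ι)) ((exp (M * L) * exp (M * L)
              * exp (-(M * L)) * exp (-(M * L))) (b (j : ι))) : ℂ)) = (1 : Matrix s s ℂ) := by
          ext i j
          rw [Matrix.of_apply, hprod, ContinuousLinearMap.one_apply,
            orthonormal_iff_ite.mp b.orthonormal, Matrix.one_apply]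
          by_cases h : i = j
          · subst h; rw [if_pos rfl, if_pos rfl]
          · rw [if_neg (fun h' => h (Subtype.ext h')), if_neg h]
        rw [hmat, Matrix.det_one]
      simp only [hone]
      exact tendsto_const_nhds
  · -- (e^C - 1)(e^{C*} - 1) = C C*
    rw [hsub, hexpD]
    congr 1
    rw [add_sub_cancel_left]
  · -- M² is not trace class
    rintro ⟨A, B, hA, hB, hAB⟩
    set e : HilbertBasis ℕ ℂ (lp (fun _ : ℕ => ℂ) 2) := default with he
    have hinner : ∀ (x : lp (fun _ : ℕ => ℂ) 2) (n : ℕ),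
        (inner ℂ (e n) x : ℂ) = x n := by
      intro x n
      rw [← e.repr_apply_apply]
      rfl
    have hdiag : ∀ n : ℕ, (inner ℂ (e n) ((M * M) (e n)) : ℂ)
        = if Even n ∧ n ≠ 0 then (((Real.sqrt n)⁻¹ : ℝ) : ℂ) ^ 2 else 0 := by
      intro n
      have hen : ((e n : lp (fun _ : ℕ => ℂ) 2) : ℕ → ℂ) n = 1 := by
        have h1 : (inner ℂ (e n) (e n) : ℂ) = 1 := by
          rw [orthonormal_iff_ite.mp e.orthonormal]
          simp
        rw [← hinner (e n) n, h1]
      rw [hinner, ContinuousLinearMap.mul_apply, hM, hM, hen]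
      by_cases h : Even n ∧ n ≠ 0
      · simp [h]
        ring
      · simp [h]
    -- summability of the diagonal from the factorization
    have hA' : Summable fun n => ‖ContinuousLinearMap.adjoint A (e n)‖ ^ 2 :=
      hs_adjoint_s17 A e (hA ℕ e)
    have hB' : Summable fun n => ‖B (e n)‖ ^ 2 := hB ℕ e
    have hprod_sum : Summable fun n => ‖ContinuousLinearMap.adjoint A (e n)‖ * ‖B (e n)‖ := by
      refine Summable.of_nonneg_of_le (fun n => by positivity) (fun n => ?_)
        (((hA'.add hB').mul_left (1/2 : ℝ)))
      have h2 := two_mul_le_add_sq ‖ContinuousLinearMap.adjoint A (e n)‖ ‖B (e n)‖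
      nlinarith [h2]
    have key : ∀ n, ‖(inner ℂ (e n) ((M * M) (e n)) : ℂ)‖
        ≤ ‖ContinuousLinearMap.adjoint A (e n)‖ * ‖B (e n)‖ := by
      intro n
      rw [hAB]
      have h1 : (inner ℂ (e n) ((A ∘L B) (e n)) : ℂ)
          = inner ℂ (ContinuousLinearMap.adjoint A (e n)) (B (e n)) := by
        rw [ContinuousLinearMap.comp_apply, ContinuousLinearMap.adjoint_inner_left]
      rw [h1]
      exact norm_inner_le_norm _ _
    have hsum : Summable fun n => ‖(inner ℂ (e n) ((M * M) (e n)) : ℂ)‖ :=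
      Summable.of_nonneg_of_le (fun n => norm_nonneg _) key hprod_sum
    -- but the diagonal is 1/n at even n, which is not summable
    have hval : ∀ k : ℕ, ‖(inner ℂ (e (2*k+2)) ((M * M) (e (2*k+2))) : ℂ)‖
        = ((2*(k:ℝ)+2))⁻¹ := by
      intro k
      rw [hdiag]
      have hcond : Even (2*k+2) ∧ 2*k+2 ≠ 0 := ⟨⟨k+1, by ring⟩, by omega⟩
      rw [if_pos hcond]
      have hpos : (0:ℝ) ≤ ((2*k+2 : ℕ) : ℝ) := by positivity
      have : ((((Real.sqrt (2*k+2 : ℕ))⁻¹ : ℝ) : ℂ)) ^ 2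
          = ((((Real.sqrt (2*k+2 : ℕ)) ^ 2)⁻¹ : ℝ) : ℂ) := by
        push_cast
        ring
      rw [this, Real.sq_sqrt hpos]
      rw [Complex.norm_real]
      rw [Real.norm_eq_abs, abs_of_nonneg (by positivity)]
      push_cast
      ring_nf
    have hinj : Function.Injective (fun k : ℕ => 2*k+2) := by
      intro a b h
      simp only [] at h
      omega
    have hsum2 : Summable fun k : ℕ => ((2*(k:ℝ)+2))⁻¹ := by
      have := hsum.comp_injective hinj
      refine this.congr fun k => ?_
      simp only [Function.comp_apply]
      rw [hval]
    have hsum3 : Summable (fun n : ℕ => ((n:ℝ))⁻¹) := by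
      rw [← summable_nat_add_iff 1]
      have := hsum2.mul_left (2:ℝ)
      refine this.congr fun k => ?_
      push_cast
      rw [eq_comm]
      rw [inv_eq_iff_eq_inv]
      have h1 : (2:ℝ)*(k:ℝ)+2 ≠ 0 := by positivity
      field_simp
    exact Real.not_summable_natCast_inv hsum3
end
end
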